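/- Let α : S^k → 2^P be the abstraction mapping a composed state to the set of predicates it satisfies, for a finite predicate set P. Then a composed system T^f has an inductive invariant expressible as a Boolean combination of predicates in P if and only if its predicate abstraction is safe, i.e., no abstract state reachable (via the abstract transition relation) from the abstraction of pre violates the abstract post-condition; here pre, post, and the conditions defining f are assumed expressible as Boolean combinations of P (adequacy). -/
import Mathlib


/-- The abstraction function mapping a composed state to the valuation of the
predicates it satisfies. -/
def alphaMap {X ι : Type*} (pred : ι → Set X) (x : X) : ι → Prop :=
  fun i => x ∈ pred i

/-- Transition relation of the composed system `T^f`. -/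
def compStep {S : Type*} {k : ℕ} (R : S → S → Prop)
    (f : (Fin k → S) → Finset (Fin k)) (x x' : Fin k → S) : Prop :=
  (∀ i ∈ f x, R (x i) (x' i)) ∧ ∀ i ∉ f x, x' i = x i

/-- The abstract (existential) transition relation induced by predicate abstraction. -/
def absTrans {X ι : Type*} (pred : ι → Set X) (Tc : X → X → Prop)
    (v₁ v₂ : ι → Prop) : Prop :=
  ∃ x₁ x₂, alphaMap pred x₁ = v₁ ∧ alphaMap pred x₂ = v₂ ∧ Tc x₁ x₂

/-- Assuming adequacy (`pre`, `post`, each terminal condition `F^i`, and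
the conditions defining `f` are expressible as Boolean combinations of the finite
predicate set `P`, i.e. as `α`-preimages of abstract sets), the composed system `T^f`
has an inductive invariant expressible over `P` iff its predicate abstraction is safe:
no abstract state reachable from the abstraction of `pre` via the abstract transition
relation violates the abstract post-condition. -/
theorem invariant_in_lang_iff_abstraction_safe {S : Type*} {k : ℕ} {ι : Type*}
    [Fintype ι] (pred : ι → Set (Fin k → S)) (R : S → S → Prop) (F : Set S)
    (f : (Fin k → S) → Finset (Fin k)) (pre post : Set (Fin k → S))
    (preA postA : Set (ι → Prop)) (FA : Fin k → Set (ι → Prop))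
    (fA : Finset (Fin k) → Set (ι → Prop))
    (hpre : pre = alphaMap pred ⁻¹' preA)
    (hpost : post = alphaMap pred ⁻¹' postA)
    (hF : ∀ i : Fin k, {x : Fin k → S | x i ∈ F} = alphaMap pred ⁻¹' FA i)
    (hf : ∀ M : Finset (Fin k), {x : Fin k → S | f x = M} = alphaMap pred ⁻¹' fA M) :
    (∃ InvA : Set (ι → Prop),
      pre ⊆ alphaMap pred ⁻¹' InvA ∧
      (∀ x x' : Fin k → S, x ∈ alphaMap pred ⁻¹' InvA → compStep R f x x' →
        x' ∈ alphaMap pred ⁻¹' InvA) ∧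
      (∀ x ∈ alphaMap pred ⁻¹' InvA, (∀ i, x i ∈ F) → x ∈ post)) ↔
    (∀ (x₀ : Fin k → S) (v : ι → Prop), x₀ ∈ pre →
      Relation.ReflTransGen (absTrans pred (compStep R f)) (alphaMap pred x₀) v →
      (∀ i, v ∈ FA i) → v ∈ postA) := by
  constructor
  · rintro ⟨InvA, hini, hind, hsafe⟩ x₀ v hx₀ hreach hva
    revert hva
    have key : ∃ x, alphaMap pred x = v ∧ alphaMap pred x ∈ InvA := by
      induction hreach with
      | refl => exact ⟨x₀, rfl, hini hx₀⟩
      | tail hab hbc ih =>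
        obtain ⟨x, hx, hInv⟩ := ih
        obtain ⟨x₁, x₂, h1, h2, hT⟩ := hbc
        have hx₁ : alphaMap pred x₁ ∈ InvA := by rw [h1, ← hx]; exact hInv
        exact ⟨x₂, h2, hind x₁ x₂ hx₁ hT⟩
    intro hva
    obtain ⟨x, hx, hInv⟩ := key
    have hxF : ∀ i, x i ∈ F := by
      intro i
      have := (hF i).symm ▸ (show x ∈ alphaMap pred ⁻¹' FA i by
        simp only [Set.mem_preimage, hx]; exact hva i)
      exact this
    have := hsafe x hInv hxF
    rw [hpost] at this
    simpa [hx] using this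
  · intro hsafe
    refine ⟨{v | ∃ x₀ ∈ pre, Relation.ReflTransGen (absTrans pred (compStep R f))
      (alphaMap pred x₀) v}, ?_, ?_, ?_⟩
    · intro x hx
      exact ⟨x, hx, Relation.ReflTransGen.refl⟩
    · rintro x x' ⟨x₀, hx₀, hreach⟩ hstep
      exact ⟨x₀, hx₀, hreach.tail ⟨x, x', rfl, rfl, hstep⟩⟩
    · rintro x ⟨x₀, hx₀, hreach⟩ hxF
      have hva : ∀ i, alphaMap pred x ∈ FA i := by
        intro i
        have : x ∈ alphaMap pred ⁻¹' FA i := by rw [← hF i]; exact hxF i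
        exact this
      have := hsafe x₀ (alphaMap pred x) hx₀ hreach hva
      rw [hpost]; exact this
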